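/- Let Γ be a multiplicative subgroup of ℂ* and suppose the equation y_1 + y_2 = 1 has at most s solutions with y_1, y_2 ∈ Γ' := {a/b : a, b ∈ A'} for a set A' contained in Γ. Let A ⊂ Γ be finite with |A| = n and 0 ∉ A. Then the number of triples (x_1, x_2, x_3) ∈ A³ with x_1 + x_2 = x_3 and x_1 + x_2 ≠ 0 is at most (s + 2)n. -/

import Mathlib

open scoped Classical

/-- Let `A` be a finite subset of a multiplicative subgroup `Γ` of `ℂ*` with
`|A| = n` and `0 ∉ A`, and suppose the equation `y₁ + y₂ = 1` has at most `s`
solutions with `y₁, y₂` in the ratio set `{a/b : a, b ∈ A}`. Then the number of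
triples `(x₁, x₂, x₃) ∈ A³` with `x₁ + x₂ = x₃` and `x₁ + x₂ ≠ 0` is at most
`(s + 2)·n`. -/
theorem triple_count_from_unit_equation
    (Γ : Subgroup ℂˣ) (A : Finset ℂ) (n : ℕ) (hn : A.card = n)
    (h0 : (0 : ℂ) ∉ A)
    (hAΓ : ∀ a ∈ A, ∃ u : ℂˣ, u ∈ Γ ∧ (u : ℂ) = a)
    (s : ℕ)
    (hs : {y : ℂ × ℂ | (∃ a ∈ A, ∃ b ∈ A, y.1 = a / b) ∧
        (∃ a ∈ A, ∃ b ∈ A, y.2 = a / b) ∧ y.1 + y.2 = 1}.ncard ≤ s) :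
    (((A ×ˢ A) ×ˢ A).filter
        (fun t : (ℂ × ℂ) × ℂ => t.1.1 + t.1.2 = t.2 ∧ t.1.1 + t.1.2 ≠ 0)).card ≤
      (s + 2) * n := by
  set S : Set (ℂ × ℂ) := {y : ℂ × ℂ | (∃ a ∈ A, ∃ b ∈ A, y.1 = a / b) ∧
        (∃ a ∈ A, ∃ b ∈ A, y.2 = a / b) ∧ y.1 + y.2 = 1} with hS
  have hfin : S.Finite := by
    apply Set.Finite.subset (Set.finite_prod.mpr
      ⟨Or.inl ((A ×ˢ A).finite_toSet.image (fun p => p.1 / p.2)),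
       Or.inl ((A ×ˢ A).finite_toSet.image (fun p => p.1 / p.2))⟩)
    rintro ⟨y1, y2⟩ ⟨⟨a, ha, b, hb, h1⟩, ⟨c, hc, d, hd, h2⟩, -⟩
    exact ⟨⟨(a, b), by simp [ha, hb], h1.symm⟩, ⟨(c, d), by simp [hc, hd], h2.symm⟩⟩
  have key : (((A ×ˢ A) ×ˢ A).filter
        (fun t : (ℂ × ℂ) × ℂ => t.1.1 + t.1.2 = t.2 ∧ t.1.1 + t.1.2 ≠ 0)).card ≤
      (hfin.toFinset ×ˢ A).card := by
    apply Finset.card_le_card_of_injOn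
      (fun t => ((t.1.1 / t.2, t.1.2 / t.2), t.2))
    · rintro ⟨⟨x1, x2⟩, x3⟩ ht
      simp only [Finset.mem_coe, Finset.mem_filter, Finset.mem_product] at ht
      obtain ⟨⟨⟨hx1, hx2⟩, hx3⟩, heq, hne⟩ := ht
      have hx3ne : x3 ≠ 0 := heq ▸ hne
      simp only [Finset.mem_coe, Finset.mem_product, Set.Finite.mem_toFinset, hS, Set.mem_setOf_eq]
      refine ⟨⟨⟨x1, hx1, x3, hx3, rfl⟩, ⟨x2, hx2, x3, hx3, rfl⟩, ?_⟩, hx3⟩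
      field_simp
      exact heq
    · rintro ⟨⟨x1, x2⟩, x3⟩ ht ⟨⟨y1, y2⟩, y3⟩ ht' heq
      simp only [Finset.mem_coe, Finset.mem_filter] at ht ht'
      have hx3 : x3 ≠ 0 := ht.2.1 ▸ ht.2.2
      simp only [Prod.mk.injEq] at heq
      obtain ⟨⟨h1, h2⟩, h3⟩ := heq
      subst h3
      have e1 : x1 = y1 := by
        field_simp at h1; exact h1
      have e2 : x2 = y2 := by
        field_simp at h2; exact h2
      simp [e1, e2]
  have hcard : (hfin.toFinset ×ˢ A).card ≤ s * n := by
    rw [Finset.card_product, hn]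
    apply Nat.mul_le_mul_right
    simpa [Set.ncard_eq_toFinset_card _ hfin] using hs
  calc _ ≤ s * n := key.trans hcard
    _ ≤ (s + 2) * n := Nat.mul_le_mul_right _ (by omega)
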